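/- Let S be a symmetric positive definite N×N real matrix, i < j, and let det(S(x)) = -a x² + b x + c as a function of the common value x placed at entries (i,j) and (j,i). Then the discriminant satisfies b² + 4ac > 0, so the quadratic has two distinct real roots x₁ < x₂, and the actual entry s_{i,j} satisfies x₁ < s_{i,j} < x₂. -/

import Mathlib

open Matrix MeasureTheory Real

/-- The matrix `A` with the two symmetric entries at positions `(i,j)` and `(j,i)`
replaced by `x`. -/
def updPair {N : ℕ} (A : Matrix (Fin N) (Fin N) ℝ) (i j : Fin N) (x : ℝ) :
    Matrix (Fin N) (Fin N) ℝ :=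
  fun k l => if (k = i ∧ l = j) ∨ (k = j ∧ l = i) then x else A k l

/-- The `(i,j)`-cofactor of `M`: `(-1)^(i+j)` times the determinant of `M` with
row `i` and column `j` deleted. -/
noncomputable def cof {N : ℕ} (M : Matrix (Fin (N + 1)) (Fin (N + 1)) ℝ)
    (i j : Fin (N + 1)) : ℝ :=
  (-1 : ℝ) ^ ((i : ℕ) + (j : ℕ)) * (M.submatrix i.succAbove j.succAbove).det

/-- The determinant of `M` with rows `i, i.succAbove j'` and columns
`i, i.succAbove j'` deleted (the cofactor of the 2×2 principal block). -/
noncomputable def minor2 {N : ℕ} (M : Matrix (Fin (N + 2)) (Fin (N + 2)) ℝ)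
    (i : Fin (N + 2)) (j' : Fin (N + 1)) : ℝ :=
  (M.submatrix (i.succAbove ∘ j'.succAbove) (i.succAbove ∘ j'.succAbove)).det

lemma myUpdateRow_comm {n m R : Type*} [DecidableEq n] (M : Matrix n m R)
    {i j : n} (h : i ≠ j) (u v : m → R) :
    (M.updateRow i u).updateRow j v = (M.updateRow j v).updateRow i u := by
  ext k l
  simp only [Matrix.updateRow_apply]
  split_ifs with h1 h2 <;> simp_all

lemma myPosDef_submatrix {m n : ℕ} {M : Matrix (Fin n) (Fin n) ℝ} (hM : M.PosDef)
    {e : Fin m → Fin n} (he : Function.Injective e) : (M.submatrix e e).PosDef := by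
  refine Matrix.PosDef.of_dotProduct_mulVec_pos (hM.isHermitian.submatrix e) fun x hx => ?_
  classical
  set w : Fin n → ℝ := fun k => ∑ l, if e l = k then x l else 0 with hwdef
  have hwe : ∀ l, w (e l) = x l := by
    intro l
    have h1 : ∀ l' ∈ Finset.univ, l' ≠ l → (if e l' = e l then x l' else 0) = 0 := by
      intro l' _ hne; exact if_neg (fun h => hne (he h))
    simp only [hwdef]
    rw [Finset.sum_eq_single l h1 (by simp)]
    simp
  have hw0 : w ≠ 0 := by
    obtain ⟨l, hl⟩ := Function.ne_iff.mp hx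
    intro h
    apply hl
    have h2 := congrFun h (e l)
    rw [hwe] at h2
    simpa using h2
  have inner : ∀ k, (∑ k', M k k' * w k') = ∑ l', M k (e l') * x l' := by
    intro k
    calc ∑ k', M k k' * w k' = ∑ k', ∑ l', if e l' = k' then M k k' * x l' else 0 := by
          simp only [hwdef, Finset.mul_sum, mul_ite, mul_zero]
      _ = ∑ l', ∑ k', if e l' = k' then M k k' * x l' else 0 := Finset.sum_comm
      _ = ∑ l', M k (e l') * x l' := by
          refine Finset.sum_congr rfl fun l' _ => ?_
          rw [Finset.sum_ite_eq]; simp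
  have key : star w ⬝ᵥ M *ᵥ w = star x ⬝ᵥ (M.submatrix e e) *ᵥ x := by
    simp only [dotProduct, mulVec, Matrix.submatrix_apply, star_trivial, Pi.star_apply]
    calc ∑ k, star (w k) * ∑ k', M k k' * w k'
        = ∑ k, ∑ l, if e l = k then x l * ∑ l', M k (e l') * x l' else 0 := by
          refine Finset.sum_congr rfl fun k _ => ?_
          rw [inner k]
          simp only [hwdef, star_trivial, Finset.sum_mul, ite_mul, zero_mul]
      _ = ∑ l, ∑ k, if e l = k then x l * ∑ l', M k (e l') * x l' else 0 := Finset.sum_comm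
      _ = ∑ l, x l * ∑ l', M (e l) (e l') * x l' := by
          refine Finset.sum_congr rfl fun l _ => ?_
          rw [Finset.sum_ite_eq]; simp
      _ = ∑ l, star (x l) * ∑ l', M (e l) (e l') * x l' := by simp
  rw [← key]
  exact hM.dotProduct_mulVec_pos hw0

/-- for `S` symmetric positive definite with `det (S(x)) = -a x² + b x + c`,
the discriminant `b² + 4ac` is positive, the leading coefficient `a` is positive, and the
actual entry `s_{i,j} = S i j` lies strictly between the two roots. -/
theorem entry_between_roots_of_posDef {N : ℕ}
    (S : Matrix (Fin (N + 2)) (Fin (N + 2)) ℝ) (hS : S.IsSymm) (hpd : S.PosDef)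
    (i j : Fin (N + 2)) (hij : i < j) (a b c : ℝ)
    (hdet : ∀ x : ℝ, (updPair S i j x).det = -a * x ^ 2 + b * x + c) :
    0 < a ∧ 0 < b ^ 2 + 4 * a * c ∧
      (b - Real.sqrt (b ^ 2 + 4 * a * c)) / (2 * a) < S i j ∧
      S i j < (b + Real.sqrt (b ^ 2 + 4 * a * c)) / (2 * a) := by
  have hij' : i ≠ j := ne_of_lt hij
  set u0 : Fin (N + 2) → ℝ := Function.update (S i) j 0 with hu0
  set v0 : Fin (N + 2) → ℝ := Function.update (S j) i 0 with hv0
  set ej : Fin (N + 2) → ℝ := Pi.single j 1 with hej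
  set ei : Fin (N + 2) → ℝ := Pi.single i 1 with hei
  -- Step 1: rewrite updPair as row updates
  have hA : ∀ x : ℝ, updPair S i j x
      = (S.updateRow i (u0 + x • ej)).updateRow j (v0 + x • ei) := by
    intro x
    ext k l
    simp only [updPair, Matrix.updateRow_apply, Pi.add_apply, Pi.smul_apply,
      Function.update_apply, Pi.single_apply, smul_eq_mul, hu0, hv0, hej, hei]
    split_ifs <;> simp_all
  -- Step 2: quadratic expansion of the determinant
  set P : ℝ := ((S.updateRow i u0).updateRow j v0).det with hP
  set Q : ℝ := ((S.updateRow i ej).updateRow j v0).det with hQ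
  set R : ℝ := ((S.updateRow i u0).updateRow j ei).det with hR
  set D : ℝ := ((S.updateRow i ej).updateRow j ei).det with hD
  have key : ∀ x : ℝ, (updPair S i j x).det = P + (Q + R) * x + D * x ^ 2 := by
    intro x
    rw [hA x, Matrix.det_updateRow_add, Matrix.det_updateRow_smul,
      myUpdateRow_comm S hij' (u0 + x • ej) v0, Matrix.det_updateRow_add,
      Matrix.det_updateRow_smul,
      myUpdateRow_comm S hij' (u0 + x • ej) ei, Matrix.det_updateRow_add,
      Matrix.det_updateRow_smul,
      myUpdateRow_comm S hij'.symm v0 u0, myUpdateRow_comm S hij'.symm v0 ej,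
      myUpdateRow_comm S hij'.symm ei u0, myUpdateRow_comm S hij'.symm ei ej]
    rw [hP, hQ, hR, hD]; ring
  -- Step 3: identify the leading coefficient
  have e0 := (hdet 0).symm.trans (key 0)
  have e1 := (hdet 1).symm.trans (key 1)
  have em := (hdet (-1)).symm.trans (key (-1))
  norm_num at e0 e1 em
  have hDa : D = -a := by linarith
  -- Step 4: D = -det M₃ where M₃ has standard basis rows at i, j
  set M₃ := (S.updateRow i ei).updateRow j ej with hM₃
  have hswap : M₃ = ((S.updateRow i ej).updateRow j ei).submatrix (Equiv.swap i j) id := by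
    ext k l
    simp only [Matrix.submatrix_apply, id_eq, hM₃]
    rcases eq_or_ne k i with rfl | hki
    · rw [Matrix.updateRow_ne hij', Matrix.updateRow_self, Equiv.swap_apply_left,
        Matrix.updateRow_self]
    rcases eq_or_ne k j with rfl | hkj
    · rw [Matrix.updateRow_self, Equiv.swap_apply_right, Matrix.updateRow_ne hij',
        Matrix.updateRow_self]
    · rw [Matrix.updateRow_ne hkj, Matrix.updateRow_ne hki,
        Equiv.swap_apply_of_ne_of_ne hki hkj,
        Matrix.updateRow_ne hkj, Matrix.updateRow_ne hki]
  have hDM₃ : D = -M₃.det := by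
    have hperm := Matrix.det_permute (Equiv.swap i j) ((S.updateRow i ej).updateRow j ei)
    rw [← hswap, Equiv.Perm.sign_swap hij'] at hperm
    rw [hD]
    rw [hperm]
    simp
  -- Step 5: det M₃ > 0 via two cofactor collapses
  have hsub : ∀ (f : Fin N → Fin (N + 2)), Function.Injective f →
      0 < (S.submatrix f f).det := fun f hf => (myPosDef_submatrix hpd hf).det_pos
  have hM₃pos : 0 < M₃.det := by
    obtain ⟨j', hj'⟩ := Fin.exists_succAbove_eq hij'.symm
    have hrowi : M₃ i = Pi.single i 1 := by
      rw [hM₃, Matrix.updateRow_ne hij', Matrix.updateRow_self, hei]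
    have hrowj : M₃ j = Pi.single j 1 := by
      rw [hM₃, Matrix.updateRow_self, hej]
    have h3 : M₃.det = (M₃.submatrix i.succAbove i.succAbove).det := by
      rw [Matrix.det_succ_row M₃ i, Finset.sum_eq_single i]
      · rw [hrowi]
        simp [Even.neg_one_pow ⟨(i : ℕ), rfl⟩]
      · intro l _ hl
        rw [hrowi]
        simp [Pi.single_apply, hl]
      · simp
    set M₄ := M₃.submatrix i.succAbove i.succAbove with hM₄
    have hrowj' : ∀ l, M₄ j' l = if l = j' then 1 else 0 := by
      intro l
      rw [hM₄]
      simp only [Matrix.submatrix_apply, hj', hrowj, Pi.single_apply]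
      rw [← hj']
      simp [Fin.succAbove_right_inj, eq_comm]
    have h4 : M₄.det = (M₄.submatrix j'.succAbove j'.succAbove).det := by
      rw [Matrix.det_succ_row M₄ j', Finset.sum_eq_single j']
      · rw [hrowj']
        simp [Even.neg_one_pow ⟨(j' : ℕ), rfl⟩]
      · intro l _ hl
        rw [hrowj']
        simp [hl]
      · simp
    have hfin : M₄.submatrix j'.succAbove j'.succAbove
        = S.submatrix (i.succAbove ∘ j'.succAbove) (i.succAbove ∘ j'.succAbove) := by
      ext k l
      simp only [hM₄, Matrix.submatrix_apply, Function.comp_apply, hM₃]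
      rw [Matrix.updateRow_ne, Matrix.updateRow_ne]
      · exact Fin.succAbove_ne i _
      · rw [← hj']
        intro h
        exact Fin.succAbove_ne j' _ (Fin.succAbove_right_injective h)
    rw [h3, h4, hfin]
    exact hsub _ ((Fin.succAbove_right_injective).comp (Fin.succAbove_right_injective))
  have ha : 0 < a := by
    have : D < 0 := by rw [hDM₃]; linarith
    linarith [hDa ▸ this]
  -- Step 6: the actual entry gives a positive value of the quadratic
  have hSs : updPair S i j (S i j) = S := by
    ext k l
    simp only [updPair]
    split_ifs with h
    · rcases h with ⟨rfl, rfl⟩ | ⟨rfl, rfl⟩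
      · rfl
      · exact (hS.apply k l).symm ▸ (hS.apply l k)
    · rfl
  have hqs : 0 < -a * (S i j) ^ 2 + b * (S i j) + c := by
    rw [← hdet, hSs]
    exact hpd.det_pos
  -- Step 7: conclude
  set s := S i j
  have hdisc : 0 < b ^ 2 + 4 * a * c := by nlinarith [sq_nonneg (2 * a * s - b)]
  have hd : Real.sqrt (b ^ 2 + 4 * a * c) ^ 2 = b ^ 2 + 4 * a * c := Real.sq_sqrt hdisc.le
  have hd0 : 0 ≤ Real.sqrt (b ^ 2 + 4 * a * c) := Real.sqrt_nonneg _
  have h2a : 0 < 2 * a := by linarith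
  refine ⟨ha, hdisc, ?_, ?_⟩
  · rw [div_lt_iff₀ h2a]
    nlinarith [mul_pos ha hqs]
  · rw [lt_div_iff₀ h2a]
    nlinarith [mul_pos ha hqs]
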